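/- Let r ≥ 1 and suppose the polynomial z² + z + κ is irreducible over F := 𝔽_{2^r}. Let k = F((u)). Then the equation y² + (1/u)x² + x + κu = 0 has no solution x, y ∈ k. -/

import Mathlib

open HahnSeries Finset

private lemma sq_coeff_odd {R : Type*} [CommRing R] [CharP R 2]
    (f : LaurentSeries R) (m : ℤ) (hm : Odd m) : (f * f).coeff m = 0 := by
  rw [HahnSeries.coeff_mul]
  refine Finset.sum_involution (fun ij _ => ij.swap) ?_ ?_ ?_ ?_
  · intro ij _
    rw [Prod.fst_swap, Prod.snd_swap, mul_comm]
    exact CharTwo.add_self_eq_zero _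
  · intro ij hij _
    simp only [mem_addAntidiagonal] at hij
    intro h
    have h1 : ij.1 = ij.2 := by
      have := congrArg Prod.snd h; simpa using this
    rw [h1] at hij
    exact (Int.not_odd_iff_even.mpr ⟨ij.2, (hij.2.2).symm⟩) hm
  · intro ij hij
    exact Finset.swap_mem_addAntidiagonal.mpr hij
  · intro ij _; rfl

private lemma sq_coeff_even {R : Type*} [CommRing R] [CharP R 2]
    (f : LaurentSeries R) (n : ℤ) :
    (f * f).coeff (2 * n) = f.coeff n * f.coeff n := by
  classical
  rw [HahnSeries.coeff_mul]
  set S := Finset.antidiagonal f.isPWO_support f.isPWO_support (2 * n) with hS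
  have hinv : ∀ ij ∈ S.erase (n, n), ij.swap ∈ S.erase (n, n) := by
    intro ij hij
    rw [Finset.mem_erase] at hij ⊢
    refine ⟨?_, Finset.swap_mem_addAntidiagonal.mpr hij.2⟩
    intro h
    apply hij.1
    have h1 : ij.2 = n := congrArg Prod.fst h
    have h2 : ij.1 = n := congrArg Prod.snd h
    exact Prod.ext h2 h1
  have herase : ∑ ij ∈ S.erase (n, n), f.coeff ij.1 * f.coeff ij.2 = 0 := by
    refine Finset.sum_involution (fun ij _ => ij.swap) ?_ ?_ ?_ ?_
    · intro ij _
      rw [Prod.fst_swap, Prod.snd_swap, mul_comm]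
      exact CharTwo.add_self_eq_zero _
    · intro ij hij _
      rw [Finset.mem_erase, mem_addAntidiagonal] at hij
      intro h
      apply hij.1
      have h1 : ij.1 = ij.2 := by
        have := congrArg Prod.snd h; simpa using this
      have h3 := hij.2.2.2
      have h2 : ij.2 = n := by omega
      exact Prod.ext (h1.trans h2) h2
    · exact hinv
    · intro ij _; rfl
  by_cases hmem : (n, n) ∈ S
  · rw [← Finset.add_sum_erase _ _ hmem, herase, add_zero]
  · have hzero : f.coeff n = 0 := by
      by_contra hne
      exact hmem (mem_addAntidiagonal.mpr ⟨hne, hne, by ring⟩)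
    have : S.erase (n, n) = S := Finset.erase_eq_of_notMem hmem
    rw [← this, herase, hzero, mul_zero]

theorem stmt4 (r : ℕ) (hr : 1 ≤ r) (κ : GaloisField 2 r)
    (hirr : ∀ z : GaloisField 2 r, z ^ 2 + z + κ ≠ 0) :
    ∀ x y : LaurentSeries (GaloisField 2 r),
      y ^ 2 + (HahnSeries.single (-1 : ℤ) (1 : GaloisField 2 r)) * x ^ 2 + x +
        (HahnSeries.single (1 : ℤ) κ) ≠ 0 := by
  intro x y h
  apply hirr (x.coeff 1)
  have hc := congrArg (fun f : LaurentSeries (GaloisField 2 r) => f.coeff 1) h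
  simp only [HahnSeries.coeff_add, HahnSeries.coeff_zero] at hc
  have hy : (y ^ 2).coeff 1 = 0 := by
    rw [sq]; exact sq_coeff_odd y 1 ⟨0, by ring⟩
  have hx2 : ((HahnSeries.single (-1 : ℤ) (1 : GaloisField 2 r)) * x ^ 2).coeff 1
      = x.coeff 1 * x.coeff 1 := by
    have h2 : ((HahnSeries.single (-1 : ℤ)) (1 : GaloisField 2 r) * x ^ 2).coeff (2 + -1)
        = 1 * (x ^ 2).coeff 2 := HahnSeries.coeff_single_mul_add
    norm_num at h2
    rw [h2, sq]
    have := sq_coeff_even x 1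
    simpa using this
  have hκ : (HahnSeries.single (1 : ℤ) κ).coeff 1 = κ := HahnSeries.coeff_single_same 1 κ
  rw [hy, hx2, hκ, zero_add] at hc
  calc x.coeff 1 ^ 2 + x.coeff 1 + κ
      = x.coeff 1 * x.coeff 1 + x.coeff 1 + κ := by ring
    _ = 0 := hc
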